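/- For all natural numbers n ≥ 2 and i with 1 ≤ i ≤ n, Σ_{j=i}^{n} 2 · ((i+j+2)!/(j+3)!) · C(n+1, j+1) < (2^n − 1) · ((n+1)!)², where C(a,b) denotes the binomial coefficient and (i+j+2)!/(j+3)! is the descending factorial (i+j+2)(i+j+1)⋯(j+4). -/

import Mathlib

open Nat

private lemma aux1 : ∀ m : ℕ, (m + 2) ^ m ≤ (m + 1) ^ (m + 1) := by
  intro m
  induction m with
  | zero => simp
  | succ m ih =>
    have key : (m + 3) ^ (m + 1) * (m + 2) ^ m ≤ (m + 2) ^ (m + 2) * (m + 2) ^ m := by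
      have h1 : (m + 3) ^ (m + 1) * (m + 1) ^ (m + 1) ≤ ((m + 2) ^ 2) ^ (m + 1) := by
        rw [← Nat.mul_pow]
        exact Nat.pow_le_pow_left (by ring_nf; omega) _
      calc (m + 3) ^ (m + 1) * (m + 2) ^ m
          ≤ (m + 3) ^ (m + 1) * (m + 1) ^ (m + 1) := Nat.mul_le_mul_left _ ih
        _ ≤ ((m + 2) ^ 2) ^ (m + 1) := h1
        _ = (m + 2) ^ (m + 2) * (m + 2) ^ m := by rw [← pow_mul, ← pow_add]; ring_nf
    exact Nat.le_of_mul_le_mul_right key (Nat.pow_pos (by omega))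

private lemma aux2 : ∀ m : ℕ, (m + 1) ^ m ≤ (m + 1)! * m ! := by
  intro m
  induction m with
  | zero => simp
  | succ m ih =>
    calc (m + 2) ^ (m + 1) = (m + 2) * (m + 2) ^ m := by ring
      _ ≤ (m + 2) * ((m + 1) ^ (m + 1)) := Nat.mul_le_mul_left _ (aux1 m)
      _ = (m + 2) * ((m + 1) * (m + 1) ^ m) := by ring
      _ ≤ (m + 2) * ((m + 1) * ((m + 1)! * m !)) := by
          exact Nat.mul_le_mul_left _ (Nat.mul_le_mul_left _ ih)
      _ = (m + 2)! * (m + 1)! := by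
          rw [Nat.factorial_succ (m + 1), Nat.factorial_succ m]; ring

private lemma aux3 (k : ℕ) : 2 * (k + 2) ^ k < ((k + 2)!) ^ 2 := by
  have h1 : (k + 2) ^ (k + 1) ≤ (k + 2)! * (k + 1)! := aux2 (k + 1)
  have h2 : (k + 2) ^ k * (k + 2) ≤ ((k + 1)!) ^ 2 * (k + 2) := by
    calc (k + 2) ^ k * (k + 2) = (k + 2) ^ (k + 1) := (pow_succ _ _).symm
      _ ≤ (k + 2)! * (k + 1)! := h1
      _ = ((k + 1)!) ^ 2 * (k + 2) := by
          rw [Nat.factorial_succ (k + 1), sq]; ring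
  have h4 : (k + 2) ^ k ≤ ((k + 1)!) ^ 2 :=
    Nat.le_of_mul_le_mul_right h2 (by omega)
  have hfpos : 0 < ((k + 1)!) ^ 2 := Nat.pow_pos (Nat.factorial_pos _)
  calc 2 * (k + 2) ^ k ≤ 2 * ((k + 1)!) ^ 2 := Nat.mul_le_mul_left _ h4
    _ < (k + 2) ^ 2 * ((k + 1)!) ^ 2 :=
        Nat.mul_lt_mul_of_lt_of_le (by nlinarith) le_rfl hfpos
    _ = ((k + 2)!) ^ 2 := by rw [← mul_pow, Nat.factorial_succ (k + 1)]

private lemma term_lt (n i j : ℕ) (hi : 1 ≤ i) (hij : i ≤ j) (hjn : j ≤ n) :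
    2 * ((i + j + 2)! / (j + 3)!) * (n + 1).choose (j + 1)
      < 2 ^ (j - 1) * ((n + 1)!) ^ 2 := by
  have hD : (i + j + 2)! / (j + 3)! = (i + j + 2).descFactorial (i - 1) := by
    have h : (i + j + 2) - (i - 1) = j + 3 := by omega
    rw [Nat.descFactorial_eq_div (by omega), h]
  have h1 : (i + j + 2).descFactorial (i - 1) ≤ (2 * (j + 1)) ^ (j - 1) := by
    calc (i + j + 2).descFactorial (i - 1) ≤ (i + j + 2) ^ (i - 1) :=
          Nat.descFactorial_le_pow _ _
      _ ≤ (2 * (j + 1)) ^ (i - 1) := Nat.pow_le_pow_left (by omega) _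
      _ ≤ (2 * (j + 1)) ^ (j - 1) := Nat.pow_le_pow_right (by omega) (by omega)
  have hC1 : 1 ≤ (n + 1).choose (j + 1) := Nat.choose_pos (by omega)
  have hCF : (n + 1).choose (j + 1) * (j + 1)! ≤ (n + 1)! := by
    have := Nat.choose_mul_factorial_mul_factorial (show j + 1 ≤ n + 1 by omega)
    calc (n + 1).choose (j + 1) * (j + 1)!
        ≤ (n + 1).choose (j + 1) * (j + 1)! * (n + 1 - (j + 1))! :=
          Nat.le_mul_of_pos_right _ (Nat.factorial_pos _)
      _ = (n + 1)! := this
  -- key: 2 * (j+1)^(j-1) * C < ((n+1)!)^2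
  have hkey : 2 * (j + 1) ^ (j - 1) * (n + 1).choose (j + 1) < ((n + 1)!) ^ 2 := by
    obtain ⟨k, hk⟩ : ∃ k, j = k + 1 := ⟨j - 1, by omega⟩
    subst hk
    have h3 : 2 * (k + 2) ^ k < ((k + 2)!) ^ 2 := aux3 k
    calc 2 * (k + 1 + 1) ^ (k + 1 - 1) * (n + 1).choose (k + 1 + 1)
        = (2 * (k + 2) ^ k) * (n + 1).choose (k + 2) := by norm_num
      _ < ((k + 2)!) ^ 2 * (n + 1).choose (k + 2) :=
          Nat.mul_lt_mul_of_lt_of_le h3 le_rfl hC1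
      _ = (k + 2)! * ((n + 1).choose (k + 2) * (k + 2)!) := by ring
      _ ≤ (k + 2)! * (n + 1)! := Nat.mul_le_mul_left _ (by simpa using hCF)
      _ ≤ (n + 1)! * (n + 1)! := Nat.mul_le_mul_right _ (Nat.factorial_le (by omega))
      _ = ((n + 1)!) ^ 2 := (sq _).symm
  calc 2 * ((i + j + 2)! / (j + 3)!) * (n + 1).choose (j + 1)
      ≤ 2 * ((2 * (j + 1)) ^ (j - 1)) * (n + 1).choose (j + 1) := by
        rw [hD]
        exact Nat.mul_le_mul_right _ (Nat.mul_le_mul_left _ h1)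
    _ = 2 ^ (j - 1) * (2 * (j + 1) ^ (j - 1) * (n + 1).choose (j + 1)) := by
        rw [Nat.mul_pow]; ring
    _ < 2 ^ (j - 1) * ((n + 1)!) ^ 2 := by
        exact Nat.mul_lt_mul_of_le_of_lt (le_refl _) hkey (Nat.pow_pos (by omega))

private lemma sum_two_pow (n : ℕ) : ∑ j ∈ Finset.range n, 2 ^ j = 2 ^ n - 1 := by
  induction n with
  | zero => simp
  | succ n ih =>
    rw [Finset.sum_range_succ, ih, pow_succ]
    have : 1 ≤ 2 ^ n := Nat.one_le_two_pow
    omega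

/-- For all natural numbers `n ≥ 2` and `1 ≤ i ≤ n`,
`Σ_{j=i}^{n} 2 * ((i+j+2)!/(j+3)!) * C(n+1, j+1) < (2^n − 1) * ((n+1)!)²`,
where `(i+j+2)!/(j+3)!` is the (exact) descending factorial
`(i+j+2)(i+j+1)⋯(j+4)`. -/
theorem sum_descFactorial_choose_lt (n i : ℕ) (hn : 2 ≤ n) (hi : 1 ≤ i) (hin : i ≤ n) :
    ∑ j ∈ Finset.Icc i n, 2 * ((i + j + 2)! / (j + 3)!) * (n + 1).choose (j + 1)
      < (2 ^ n - 1) * ((n + 1)!) ^ 2 := by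
  have hne : (Finset.Icc i n).Nonempty := Finset.nonempty_Icc.2 hin
  calc ∑ j ∈ Finset.Icc i n, 2 * ((i + j + 2)! / (j + 3)!) * (n + 1).choose (j + 1)
      < ∑ j ∈ Finset.Icc i n, 2 ^ (j - 1) * ((n + 1)!) ^ 2 := by
        apply Finset.sum_lt_sum_of_nonempty hne
        intro j hj
        rw [Finset.mem_Icc] at hj
        exact term_lt n i j hi hj.1 hj.2
    _ ≤ ∑ j ∈ Finset.Icc 1 n, 2 ^ (j - 1) * ((n + 1)!) ^ 2 := by
        apply Finset.sum_le_sum_of_subset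
        apply Finset.Icc_subset_Icc_left hi
    _ = (∑ j ∈ Finset.Icc 1 n, 2 ^ (j - 1)) * ((n + 1)!) ^ 2 := by
        rw [Finset.sum_mul]
    _ = (2 ^ n - 1) * ((n + 1)!) ^ 2 := by
        congr 1
        have : ∑ j ∈ Finset.Icc 1 n, 2 ^ (j - 1) = ∑ j ∈ Finset.range n, 2 ^ j := by
          rw [show Finset.Icc 1 n = Finset.Ico 1 (n + 1) by rfl]
          rw [Finset.sum_Ico_eq_sum_range]
          simp
        rw [this, sum_two_pow]
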